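/- In the abstract affects setting, let T be a conical poset and let O be injective (non-degenerate embedding). If O satisfies compat-atomic with respect to A (that is, for every e ∈ S and disjoint finite Y, Z ⊆ S with Y nonempty and A({e}, Y, Z), one has F̄_s(Y ∪ Z) ⊆ J⁺(O e)), then O satisfies compat: for every triple with A(X,Y,Z) and Irred₁, F̄_s(Y ∪ Z) ⊆ F̄_s(X). -/

import Mathlib

/-- The causal future `J⁺(t) = {t' : t ≤ t'}` of a point in a partially ordered set. -/
def Jplus {T : Type*} [PartialOrder T] (t : T) : Set T := {t' : T | t ≤ t'}

/-- The support future `F̄_s(W) = ⋂_{w ∈ W} J⁺(O w)` of a finite set of random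
variable labels under an embedding `O` (with `F̄_s(∅) = T`). -/
def suppFuture {S T : Type*} [PartialOrder T] (O : S → T) (W : Finset S) : Set T :=
  ⋂ w ∈ W, Jplus (O w)

/-- `X ⊨ Y|do(Z)` is Irred₁ (relative to the set of affects relations `A`) if for
every nonempty strict subset `s_X ⊊ X`, `A s_X Y ((X∖s_X) ∪ Z)` holds. -/
def Irred1 {S : Type*} [DecidableEq S] (A : Finset S → Finset S → Finset S → Prop)
    (X Y Z : Finset S) : Prop :=
  ∀ sX : Finset S, sX ⊆ X → sX.Nonempty → sX ≠ X → A sX Y ((X \ sX) ∪ Z)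

/-- `X ⊨ Y|do(Z)` is Irred₃ (relative to `A`) if for every nonempty `s_Z ⊆ Z`,
`A s_Z Y (X ∪ (Z∖s_Z))` holds or `A s_Z Y (Z∖s_Z)` holds. -/
def Irred3 {S : Type*} [DecidableEq S] (A : Finset S → Finset S → Finset S → Prop)
    (X Y Z : Finset S) : Prop :=
  ∀ sZ : Finset S, sZ ⊆ Z → sZ.Nonempty →
    (A sZ Y (X ∪ (Z \ sZ)) ∨ A sZ Y (Z \ sZ))

/-- The embedding `O` satisfies compat with respect to `A` if for every triple of
pairwise disjoint finite sets with `X, Y` nonempty such that `A X Y Z` holds and is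
Irred₁, one has `F̄_s(Y ∪ Z) ⊆ F̄_s(X)`. -/
def Compat {S T : Type*} [DecidableEq S] [PartialOrder T]
    (A : Finset S → Finset S → Finset S → Prop) (O : S → T) : Prop :=
  ∀ X Y Z : Finset S, Disjoint X Y → Disjoint X Z → Disjoint Y Z →
    X.Nonempty → Y.Nonempty → A X Y Z → Irred1 A X Y Z →
    suppFuture O (Y ∪ Z) ⊆ suppFuture O X

/-- The joint future `f(L) = ⋂_{p ∈ L} J⁺(p)` of a subset of a poset (with `f(∅) = T`). -/
def jointFuture {T : Type*} [PartialOrder T] (L : Set T) : Set T := ⋂ p ∈ L, Jplus p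

/-- The spanning set `span(L)`: the union of all subsets `L' ⊆ L` with
`f(L') = f(L)` such that no strict subset `L'' ⊊ L'` satisfies `f(L'') = f(L)`. -/
def spanS {T : Type*} [PartialOrder T] (L : Set T) : Set T :=
  {x : T | ∃ L' : Set T, L' ⊆ L ∧ x ∈ L' ∧ jointFuture L' = jointFuture L ∧
    ∀ L'' : Set T, L'' ⊂ L' → jointFuture L'' ≠ jointFuture L}

/-- A poset is conical if for all nonempty finite subsets `L₁, L₂`,
`f(L₁) = f(L₂)` implies `span(L₁) = span(L₂)`. -/
def Conical (T : Type*) [PartialOrder T] : Prop :=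
  ∀ L₁ L₂ : Set T, L₁.Finite → L₂.Finite → L₁.Nonempty → L₂.Nonempty →
    jointFuture L₁ = jointFuture L₂ → spanS L₁ = spanS L₂

/-- The embedding `O` satisfies compat-atomic with respect to `A` if for every
`e : S` and disjoint finite `Y, Z ⊆ S` with `Y` nonempty such that `A {e} Y Z`
holds, one has `F̄_s(Y ∪ Z) ⊆ J⁺(O e)`. -/
def CompatAtomic {S T : Type*} [DecidableEq S] [PartialOrder T]
    (A : Finset S → Finset S → Finset S → Prop) (O : S → T) : Prop :=
  ∀ (e : S) (Y Z : Finset S),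
    Disjoint ({e} : Finset S) Y → Disjoint ({e} : Finset S) Z → Disjoint Y Z →
    Y.Nonempty → A {e} Y Z →
    suppFuture O (Y ∪ Z) ⊆ Jplus (O e)

lemma jointFuture_anti {T : Type*} [PartialOrder T] {L₁ L₂ : Set T} (h : L₁ ⊆ L₂) :
    jointFuture L₂ ⊆ jointFuture L₁ := by
  intro x hx
  simp only [jointFuture, Set.mem_iInter] at hx ⊢
  exact fun p hp => hx p (h hp)

lemma suppFuture_eq {S T : Type*} [PartialOrder T] (O : S → T) (W : Finset S) :
    suppFuture O W = jointFuture (O '' ↑W) := by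
  simp [suppFuture, jointFuture, Set.biInter_image]

lemma jointFuture_union {T : Type*} [PartialOrder T] (L₁ L₂ : Set T) :
    jointFuture (L₁ ∪ L₂) = jointFuture L₁ ∩ jointFuture L₂ := by
  ext x
  simp only [jointFuture, Set.mem_iInter, Set.mem_inter_iff, Set.mem_union]
  constructor
  · intro hx; exact ⟨fun p hp => hx p (Or.inl hp), fun p hp => hx p (Or.inr hp)⟩
  · rintro ⟨h1, h2⟩ p (hp | hp); exacts [h1 p hp, h2 p hp]

lemma jointFuture_singleton {T : Type*} [PartialOrder T] (p : T) :
    jointFuture ({p} : Set T) = Jplus p := by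
  simp [jointFuture]

lemma exists_minimal_support {T : Type*} [PartialOrder T] (M : Set T) (hM : M.Finite) :
    ∃ L' : Set T, L' ⊆ M ∧ jointFuture L' = jointFuture M ∧
      ∀ L'' : Set T, L'' ⊂ L' → jointFuture L'' ≠ jointFuture M := by
  classical
  have hne : ∃ n, ∃ L' : Set T, L' ⊆ M ∧ L'.ncard = n ∧ jointFuture L' = jointFuture M :=
    ⟨M.ncard, M, le_refl _, rfl, rfl⟩
  obtain ⟨L', hsub, hcard, hf⟩ := Nat.find_spec hne
  refine ⟨L', hsub, hf, ?_⟩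
  intro L'' hss hf''
  have hL'fin : L'.Finite := hM.subset hsub
  have hlt : L''.ncard < Nat.find hne := by
    rw [← hcard]; exact Set.ncard_lt_ncard hss hL'fin
  exact Nat.find_min hne hlt ⟨L'', hss.subset.trans hsub, rfl, hf''⟩

/-- In a conical space-time with a non-degenerate (injective) embedding,
compat-atomic implies compat. -/
theorem compatAtomic_implies_compat {S T : Type*} [DecidableEq S] [PartialOrder T]
    (A : Finset S → Finset S → Finset S → Prop) (O : S → T)
    (hT : Conical T) (hO : Function.Injective O)
    (h : CompatAtomic A O) : Compat A O := by
  classical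
  intro X Y Z hXY hXZ hYZ hXne hYne hA hIrr
  set P : Set T := O '' ↑(Y ∪ Z) with hPdef
  set Q : Set T := O '' ↑X with hQdef
  have hPfin : P.Finite := (Y ∪ Z).finite_toSet.image O
  have hQfin : Q.Finite := X.finite_toSet.image O
  have hPne : P.Nonempty := by
    obtain ⟨y, hy⟩ := hYne
    exact ⟨O y, Set.mem_image_of_mem O (by simp [hy])⟩
  -- each point of Q is not in P
  have hQP : ∀ e ∈ X, O e ∉ P := by
    intro e he hmem
    obtain ⟨w, hw, hew⟩ := hmem
    have : e = w := hO hew.symm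
    subst this
    simp only [Finset.coe_union, Set.mem_union, Finset.mem_coe] at hw
    rcases hw with hw | hw
    · exact (Finset.disjoint_left.mp hXY he) hw
    · exact (Finset.disjoint_left.mp hXZ he) hw
  -- key claim: for each e ∈ X, jointFuture (P ∪ (Q \ {O e})) ⊆ Jplus (O e)
  have key : ∀ e ∈ X, jointFuture (P ∪ (Q \ {O e})) ⊆ Jplus (O e) := by
    intro e he
    by_cases hX : X = {e}
    · have hQ1 : Q = {O e} := by rw [hQdef, hX]; simp
      have : P ∪ (Q \ {O e}) = P := by rw [hQ1]; simp
      rw [this, hPdef, ← suppFuture_eq]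
      refine h e Y Z ?_ ?_ hYZ hYne (hX ▸ hA)
      · rw [← hX]; exact hXY
      · rw [← hX]; exact hXZ
    · have hAe : A {e} Y ((X \ {e}) ∪ Z) := by
        refine hIrr {e} (Finset.singleton_subset_iff.mpr he) (Finset.singleton_nonempty e) ?_
        intro hc; exact hX hc.symm
      have hd1 : Disjoint ({e} : Finset S) Y := by
        simp only [Finset.disjoint_singleton_left]
        exact Finset.disjoint_left.mp hXY he
      have hd2 : Disjoint ({e} : Finset S) ((X \ {e}) ∪ Z) := by
        rw [Finset.disjoint_left]
        intro a ha hb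
        rw [Finset.mem_singleton] at ha; subst ha
        rcases Finset.mem_union.mp hb with hb | hb
        · exact (Finset.mem_sdiff.mp hb).2 (Finset.mem_singleton_self a)
        · exact Finset.disjoint_left.mp hXZ he hb
      have hd3 : Disjoint Y ((X \ {e}) ∪ Z) := by
        simp only [Finset.disjoint_union_right]
        exact ⟨Finset.disjoint_of_subset_right (Finset.sdiff_subset) hXY.symm, hYZ⟩
      have := h e Y ((X \ {e}) ∪ Z) hd1 hd2 hd3 hYne hAe
      have himg : O '' ↑(Y ∪ ((X \ {e}) ∪ Z)) = P ∪ (Q \ {O e}) := by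
        have h1 : (↑(Y ∪ ((X \ {e}) ∪ Z)) : Set S) = ↑(Y ∪ Z) ∪ (↑X \ {e}) := by
          simp only [Finset.coe_union, Finset.coe_sdiff, Finset.coe_singleton]
          ext x; simp; tauto
        rw [h1, Set.image_union, Set.image_diff hO, Set.image_singleton]
      rw [suppFuture_eq, himg] at this
      exact this
  -- hence removing O e from P ∪ Q does not change the joint future
  have hsame : ∀ e ∈ X, jointFuture (P ∪ Q) = jointFuture (P ∪ (Q \ {O e})) := by
    intro e he
    have hun : P ∪ Q = (P ∪ (Q \ {O e})) ∪ {O e} := by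
      ext x
      simp only [Set.mem_union, Set.mem_diff, Set.mem_singleton_iff]
      constructor
      · rintro (hx | hx)
        · exact Or.inl (Or.inl hx)
        · by_cases hxe : x = O e
          · exact Or.inr hxe
          · exact Or.inl (Or.inr ⟨hx, hxe⟩)
      · rintro ((hx | hx) | hx)
        · exact Or.inl hx
        · exact Or.inr hx.1
        · exact Or.inr (hx ▸ Set.mem_image_of_mem O (by simpa using he))
    rw [hun, jointFuture_union, jointFuture_singleton]
    exact Set.inter_eq_left.mpr (key e he)
  -- take a minimal support of P ∪ Q
  obtain ⟨L', hL'sub, hL'f, hL'min⟩ := exists_minimal_support (P ∪ Q) (hPfin.union hQfin)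
  -- L' avoids Q
  have hL'P : L' ⊆ P := by
    intro x hx
    by_contra hxP
    have hxQ : x ∈ Q := (hL'sub hx).resolve_left hxP
    obtain ⟨e, he, hxe⟩ := hxQ
    have he' : e ∈ X := he
    have hspan : x ∈ spanS (P ∪ Q) := ⟨L', hL'sub, hx, hL'f, hL'min⟩
    have hne2 : (P ∪ (Q \ {O e})).Nonempty := ⟨_, Or.inl hPne.choose_spec⟩
    have heq := hT (P ∪ Q) (P ∪ (Q \ {O e})) (hPfin.union hQfin)
      (hPfin.union hQfin.diff) ⟨_, Or.inl hPne.choose_spec⟩ hne2 (hsame e he')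
    rw [heq] at hspan
    obtain ⟨L₂, hL₂sub, hxL₂, -, -⟩ := hspan
    rcases hL₂sub hxL₂ with hc | hc
    · rw [← hxe] at hc; exact hQP e he' hc
    · rw [← hxe] at hc; exact hc.2 rfl
  -- conclude
  rw [suppFuture_eq, suppFuture_eq, ← hPdef, ← hQdef]
  calc jointFuture P ⊆ jointFuture L' := jointFuture_anti hL'P
    _ = jointFuture (P ∪ Q) := hL'f
    _ ⊆ jointFuture Q := jointFuture_anti Set.subset_union_right
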